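/- For every n, k, d ∈ ℕ with k ≥ 1 and d ≥ 1, the tree U_{n, min(k,d), d} is universal for the collection of all finite ordered trees of depth at most d and n-Strahler number at most k; that is, every such finite tree is isomorphically embedded in U_{n, min(k,d), d}. -/

import Mathlib

/-- Ordered trees of finite depth: a node with children indexed by a type `K`
equipped with an order relation `lt`. The leaf is a node with empty `K`. -/
inductive OTree : Type 1
  | node (K : Type) (lt : K → K → Prop) (children : K → OTree) : OTree

namespace OTree

/-- The depth of an ordered tree (the leaf has depth 1). -/
noncomputable def depth : OTree → ℕ∞
  | .node _ _ f => 1 + ⨆ k, depth (f k)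

open scoped Classical in
/-- The `n`-Strahler number of an ordered tree: the leaf has `n`-Strahler number 1; for a
non-leaf tree whose children have maximal `n`-Strahler number `m`, it is `m+1` if at least
`n+1` children attain `m`, and `m` otherwise. -/
noncomputable def strahler (n : ℕ) : OTree → ℕ∞
  | .node K _ f =>
    if IsEmpty K then 1
    else
      if ∃ g : Fin (n+1) → K, Function.Injective g ∧
          ∀ a, strahler n (f (g a)) = ⨆ k, strahler n (f k)
      then (⨆ k, strahler n (f k)) + 1 else ⨆ k, strahler n (f k)

/-- Isomorphic embedding of ordered trees: a strictly increasing map on children indices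
such that each child embeds in its image (when the index set is empty such a map
trivially exists). -/
inductive Emb : OTree → OTree → Prop
  | mk {K lt f K' lt' f'} (φ : K → K') (hinj : Function.Injective φ)
      (hmono : ∀ a b, lt a b → lt' (φ a) (φ b))
      (h : ∀ k, Emb (f k) (f' (φ k))) :
      Emb (.node K lt f) (.node K' lt' f')

/-- `s` is a child of `t`. -/
def IsChild (s t : OTree) : Prop :=
  match t with
  | .node _ _ f => ∃ k, s = f k

/-- The subtree relation: reflexive-transitive closure of the child relation. -/
def Subtree (s t : OTree) : Prop := Relation.ReflTransGen IsChild s t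

end OTree
/-- The universal tree `U_{n,k,d}`: for `1 ≤ k ≤ d`, its children consist of `n+1` blocks of
ω copies of `U_{n,k-1,d-1}` (omitted when `k = 1`), interleaved with `n` single copies of
`U_{n,k,d-1}` (omitted when `d - 1 < k`).  Children are indexed by the lexicographic order on
`Fin (2n+1) ×ₗ ℕ`, where even first coordinates carry the ω-blocks and odd first coordinates
carry (at second coordinate 0) the single copies. For `d = 0` (a junk case) it is the leaf. -/
def Ut (n : ℕ) : ℕ → ℕ → OTree
  | _, 0 => .node Empty (fun _ _ => False) (fun e => e.elim)
  | k, d+1 =>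
    .node {q : Lex (Fin (2*n+1) × ℕ) //
            ((ofLex q).1.val % 2 = 0 ∧ 2 ≤ k) ∨
            ((ofLex q).1.val % 2 = 1 ∧ (ofLex q).2 = 0 ∧ k ≤ d)}
      (· < ·)
      (fun q => if (ofLex q.val).1.val % 2 = 0 then Ut n (k-1) d else Ut n k d)

namespace OTree

/-- A tree is finite if all index sets of children appearing in it are finite. -/
inductive IsFinite : OTree → Prop
  | node {K lt f} (hK : Finite K) (h : ∀ k, IsFinite (f k)) : IsFinite (.node K lt f)

/-- A well-formed ordered tree: all children index sets are countable and well-ordered. -/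
inductive Ordered : OTree → Prop
  | node {K lt f} (hwo : IsWellOrder K lt) (hc : Countable K) (h : ∀ k, Ordered (f k)) :
      Ordered (.node K lt f)

end OTree

namespace OTree

theorem one_le_depth : ∀ T : OTree, 1 ≤ T.depth
  | .node _ _ _ => by rw [depth]; exact le_self_add

theorem one_le_strahler (n : ℕ) : ∀ T : OTree, 1 ≤ T.strahler n
  | .node K lt f => by
    rw [strahler]
    split
    · exact le_rfl
    · next h =>
      obtain ⟨a⟩ := not_isEmpty_iff.mp h
      have h1 : 1 ≤ ⨆ k, strahler n (f k) :=
        le_trans (one_le_strahler n (f a)) (le_iSup (fun k => strahler n (f k)) a)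
      split
      · exact le_trans h1 le_self_add
      · exact h1

theorem strahler_le_depth (n : ℕ) : ∀ T : OTree, T.strahler n ≤ T.depth
  | .node K lt f => by
    rw [strahler, depth]
    have hsup : (⨆ k, strahler n (f k)) ≤ ⨆ k, depth (f k) :=
      iSup_mono fun k => strahler_le_depth n (f k)
    split
    · exact le_self_add
    · split
      · rw [add_comm]; exact add_le_add le_rfl hsup
      · exact hsup.trans le_add_self

theorem strahler_child_le (n : ℕ) {K : Type} (lt : K → K → Prop) (f : K → OTree) (a : K) :
    strahler n (f a) ≤ strahler n (.node K lt f) := by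
  rw [strahler]
  have h := le_iSup (fun k => strahler n (f k)) a
  split
  · next he => exact (he.false a).elim
  · split
    · exact h.trans le_self_add
    · exact h

open scoped Classical in
theorem card_big_le (n : ℕ) {K : Type} (lt : K → K → Prop) (f : K → OTree)
    [Fintype K] {c : ℕ∞} (hc : c ≠ ⊤)
    (hle : ∀ a, strahler n (f a) ≤ c)
    (hstr : strahler n (.node K lt f) ≤ c) :
    (Finset.univ.filter fun a : K => strahler n (f a) = c).card ≤ n := by
  by_contra hcon
  push_neg at hcon
  have hcard : n + 1 ≤ Fintype.card {a : K // strahler n (f a) = c} := by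
    rw [Fintype.card_subtype]; exact hcon
  obtain ⟨g⟩ := Function.Embedding.nonempty_of_card_le
    (α := Fin (n+1)) (β := {a : K // strahler n (f a) = c}) (by simpa using hcard)
  have hsup : (⨆ k, strahler n (f k)) = c := by
    refine le_antisymm (iSup_le hle) ?_
    have := (g 0).2
    rw [← this]
    exact le_iSup (fun k => strahler n (f k)) (g 0).1
  rw [strahler] at hstr
  split at hstr
  · next he => exact (he.false (g 0).1).elim
  · split at hstr
    · rw [hsup] at hstr
      exact absurd ((ENat.add_one_le_iff hc).mp hstr) (lt_irrefl c)
    · next hcond =>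
      refine hcond ⟨fun a => (g a).1, ?_, ?_⟩
      · intro a b hab
        exact g.injective (Subtype.ext hab)
      · intro a
        rw [(g a).2, hsup]

end OTree

open OTree

/-- for every n, k, d with k ≥ 1 and d ≥ 1, the tree U_{n,min(k,d),d} is
universal for the collection of all finite ordered trees of depth at most d and
n-Strahler number at most k: every such tree embeds isomorphically into it. -/
theorem Ut_universal (n k d : ℕ) (hk : 1 ≤ k) (hd : 1 ≤ d)
    (T : OTree) (hfin : T.IsFinite) (hord : T.Ordered)
    (hdepth : T.depth ≤ (d : ℕ∞)) (hstr : T.strahler n ≤ (k : ℕ∞)) :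
    OTree.Emb T (Ut n (min k d) d) := by
  classical
  revert hk hd hord hdepth hstr
  induction hfin generalizing k d with
  | @node K lt f hK hfin ih =>
    intro hk hd hord hdepth hstr
    cases hord with
    | node hwo hc hord =>
    by_cases hKe : IsEmpty K
    · obtain ⟨d', rfl⟩ : ∃ d', d = d' + 1 := ⟨d - 1, (Nat.succ_pred_eq_of_pos hd).symm⟩
      rw [Ut]
      exact Emb.mk (fun a => (hKe.false a).elim) (fun a => (hKe.false a).elim)
        (fun a => (hKe.false a).elim) (fun a => (hKe.false a).elim)
    obtain ⟨a0⟩ := not_isEmpty_iff.mp hKe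
    -- d ≥ 2
    have hd2 : 2 ≤ d := by
      have h2 : (2 : ℕ∞) ≤ depth (.node K lt f) := by
        rw [depth]
        have h1 := le_trans (one_le_depth (f a0)) (le_iSup (fun a => depth (f a)) a0)
        calc (2:ℕ∞) = 1 + 1 := one_add_one_eq_two.symm
        _ ≤ 1 + ⨆ a, depth (f a) := add_le_add le_rfl h1
      have h3 := h2.trans hdepth
      exact_mod_cast h3
    obtain ⟨d', rfl⟩ : ∃ d', d = d' + 1 := ⟨d - 1, (Nat.succ_pred_eq_of_pos hd).symm⟩
    have hd'1 : 1 ≤ d' := by omega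
    set KK := min k (d' + 1) with hKKdef
    have hKK1 : 1 ≤ KK := le_min hk hd
    have hKKd : KK ≤ d' + 1 := min_le_right _ _
    have hcastmin : ((KK:ℕ):ℕ∞) = min ((k:ℕ):ℕ∞) (((d'+1:ℕ)):ℕ∞) := by
      rcases le_total k (d'+1) with h | h
      · rw [hKKdef, min_eq_left h, min_eq_left (by exact_mod_cast h)]
      · rw [hKKdef, min_eq_right h, min_eq_right (by exact_mod_cast h)]
    have hstrK : strahler n (.node K lt f) ≤ (KK:ℕ∞) := by
      rw [hcastmin]
      exact le_min hstr ((strahler_le_depth n _).trans hdepth)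
    have hchildstr : ∀ a, strahler n (f a) ≤ (KK : ℕ∞) := fun a =>
      (strahler_child_le n lt f a).trans hstrK
    have hsupd : (⨆ a, depth (f a)) ≤ (d' : ℕ∞) := by
      rw [depth] at hdepth
      have h1 : (1:ℕ∞) + ⨆ a, depth (f a) ≤ 1 + (d':ℕ∞) := by
        refine hdepth.trans (le_of_eq ?_)
        push_cast
        ring
      exact (WithTop.add_le_add_iff_left (by simp : (1:ℕ∞) ≠ ⊤)).mp h1
    have hchilddepth : ∀ a, depth (f a) ≤ (d' : ℕ∞) := fun a =>
      (le_iSup (fun a => depth (f a)) a).trans hsupd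
    -- order setup
    haveI := Fintype.ofFinite K
    haveI : IsWellOrder K lt := hwo
    letI : LinearOrder K := IsWellOrder.linearOrder lt
    have hltiff : ∀ a b : K, lt a b ↔ a < b := fun a b => Iff.rfl
    set m := Fintype.card K with hm
    let e : Fin m ≃o K := monoEquivOfFin K rfl
    set Big : Fin m → Prop := fun i => strahler n (f (e i)) = (KK : ℕ∞) with hBigdef
    set b : Fin m → ℕ := fun i => (Finset.univ.filter fun j => j < i ∧ Big j).card with hbdef
    -- at most n big children
    have hBigcard : (Finset.univ.filter fun i : Fin m => Big i).card ≤ n := by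
      have h1 := card_big_le n lt f (c := (KK:ℕ∞)) (by simp) hchildstr hstrK
      refine le_trans (le_of_eq ?_) h1
      apply Finset.card_bij (fun i _ => e i)
      · intro i hi
        simp only [Finset.mem_filter, Finset.mem_univ, true_and] at hi ⊢
        exact hi
      · intro i _ j _ hij
        exact e.injective hij
      · intro a ha
        simp only [Finset.mem_filter, Finset.mem_univ, true_and] at ha
        exact ⟨e.symm a, by simpa [hBigdef] using ha, by simp⟩
    have hBig_le_d' : ∀ i, Big i → KK ≤ d' := by
      intro i hBi
      have h := (strahler_le_depth n (f (e i))).trans (hchilddepth (e i))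
      rw [hBigdef] at hBi
      rw [hBi] at h
      exact_mod_cast h
    have hSmall : ∀ i, ¬ Big i → 2 ≤ KK ∧ strahler n (f (e i)) ≤ ((KK-1 : ℕ) : ℕ∞) := by
      intro i hBi
      have hlt : strahler n (f (e i)) < (KK:ℕ∞) := lt_of_le_of_ne (hchildstr _) hBi
      obtain ⟨s, hs⟩ := WithTop.ne_top_iff_exists.mp (ne_top_of_lt hlt)
      rw [show WithTop.some s = ((s:ℕ):ℕ∞) from rfl] at hs
      rw [← hs] at hlt
      have hsKK : s < KK := ENat.coe_lt_coe.mp hlt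
      have h1 : 1 ≤ s := by
        have h2 := one_le_strahler n (f (e i))
        rw [← hs] at h2
        exact_mod_cast h2
      refine ⟨by omega, ?_⟩
      rw [← hs]
      exact ENat.coe_le_coe.mpr (by omega)
    -- properties of b
    have hb_mono : ∀ {i j : Fin m}, i ≤ j → b i ≤ b j := by
      intro i j hij
      apply Finset.card_le_card
      intro x hx
      simp only [Finset.mem_filter, Finset.mem_univ, true_and] at hx ⊢
      exact ⟨hx.1.trans_le hij, hx.2⟩
    have hb_lt : ∀ {i j : Fin m}, Big i → i < j → b i + 1 ≤ b j := by
      intro i j hBi hij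
      have hsub : insert i (Finset.univ.filter fun l => l < i ∧ Big l)
          ⊆ Finset.univ.filter fun l => l < j ∧ Big l := by
        intro x hx
        rcases Finset.mem_insert.mp hx with rfl | hx
        · simp only [Finset.mem_filter, Finset.mem_univ, true_and]
          exact ⟨hij, hBi⟩
        · simp only [Finset.mem_filter, Finset.mem_univ, true_and] at hx ⊢
          exact ⟨hx.1.trans hij, hx.2⟩
      have h2 := Finset.card_le_card hsub
      rwa [Finset.card_insert_of_notMem (by simp)] at h2
    have hb_big_le : ∀ i, Big i → b i + 1 ≤ n := by
      intro i hBi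
      have hsub : insert i (Finset.univ.filter fun l => l < i ∧ Big l)
          ⊆ Finset.univ.filter fun l => Big l := by
        intro x hx
        rcases Finset.mem_insert.mp hx with rfl | hx
        · simp only [Finset.mem_filter, Finset.mem_univ, true_and]
          exact hBi
        · simp only [Finset.mem_filter, Finset.mem_univ, true_and] at hx ⊢
          exact hx.2
      have h2 := (Finset.card_le_card hsub).trans hBigcard
      rwa [Finset.card_insert_of_notMem (by simp)] at h2
    have hb_le : ∀ i, b i ≤ n := by
      intro i
      refine le_trans (Finset.card_le_card ?_) hBigcard
      intro x hx
      simp only [Finset.mem_filter, Finset.mem_univ, true_and] at hx ⊢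
      exact hx.2
    -- the embedding map
    have hfst_big : ∀ i : Fin m, Big i → 2 * b i + 1 < 2*n+1 := by
      intro i h
      have := hb_big_le i h
      omega
    have hfst_small : ∀ i : Fin m, 2 * b i < 2*n+1 := by
      intro i
      have := hb_le i
      omega
    let pf : Fin m → Fin (2*n+1) × ℕ := fun i =>
      if h : Big i then (⟨2 * b i + 1, hfst_big i h⟩, 0) else (⟨2 * b i, hfst_small i⟩, i.val)
    have hmem : ∀ i : Fin m,
        ((pf i).1.val % 2 = 0 ∧ 2 ≤ KK) ∨ ((pf i).1.val % 2 = 1 ∧ (pf i).2 = 0 ∧ KK ≤ d') := by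
      intro i
      by_cases h : Big i
      · right
        refine ⟨?_, ?_, hBig_le_d' i h⟩
        · simp only [pf, dif_pos h]
          omega
        · simp [pf, dif_pos h]
      · left
        refine ⟨?_, (hSmall i h).1⟩
        simp only [pf, dif_neg h]
        omega
    have hpf : ∀ i j : Fin m, i < j → toLex (pf i) < toLex (pf j) := by
      intro i j hij
      rw [Prod.Lex.lt_iff]
      by_cases hi : Big i <;> by_cases hj : Big j
      · left
        simp only [pf, dif_pos hi, dif_pos hj, Fin.mk_lt_mk, ofLex_toLex]
        have := hb_lt hi hij
        omega
      · left
        simp only [pf, dif_pos hi, dif_neg hj, Fin.mk_lt_mk, ofLex_toLex]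
        have := hb_lt hi hij
        omega
      · left
        simp only [pf, dif_neg hi, dif_pos hj, Fin.mk_lt_mk, ofLex_toLex]
        have := hb_mono hij.le
        omega
      · have hbm := hb_mono hij.le
        rcases lt_or_eq_of_le hbm with hlt | heq
        · left
          simp only [pf, dif_neg hi, dif_neg hj, Fin.mk_lt_mk, ofLex_toLex]
          omega
        · right
          simp only [pf, dif_neg hi, dif_neg hj]
          exact ⟨by simp [Fin.ext_iff]; omega, hij⟩
    rw [Ut]
    let φ : K → {q : Lex (Fin (2*n+1) × ℕ) //
        ((ofLex q).1.val % 2 = 0 ∧ 2 ≤ KK) ∨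
        ((ofLex q).1.val % 2 = 1 ∧ (ofLex q).2 = 0 ∧ KK ≤ d')} :=
      fun a => ⟨toLex (pf (e.symm a)), hmem (e.symm a)⟩
    have hmono' : StrictMono φ := by
      intro a a' h
      have h2 : e.symm a < e.symm a' := e.symm.lt_iff_lt.mpr h
      exact Subtype.mk_lt_mk.mpr (hpf _ _ h2)
    refine Emb.mk φ hmono'.injective (fun a a' h => hmono' h) ?_
    intro a
    have hea : e (e.symm a) = a := e.apply_symm_apply a
    by_cases hB : Big (e.symm a)
    · have hcond : ¬ ((ofLex (φ a).val).1.val % 2 = 0) := by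
        show ¬ ((pf (e.symm a)).1.val % 2 = 0)
        simp only [pf, dif_pos hB]
        omega
      rw [if_neg hcond]
      have hKd : KK ≤ d' := hBig_le_d' _ hB
      have hstr' : strahler n (f a) ≤ ((KK:ℕ):ℕ∞) := by
        rw [hBigdef, hea] at hB
        exact le_of_eq hB
      have h := ih a KK d' hKK1 (hKK1.trans hKd) (hord a) (hchilddepth a) hstr'
      rwa [min_eq_left hKd] at h
    · have hcond : (ofLex (φ a).val).1.val % 2 = 0 := by
        show (pf (e.symm a)).1.val % 2 = 0
        simp only [pf, dif_neg hB]
        omega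
      rw [if_pos hcond]
      obtain ⟨h2, hstrS⟩ := hSmall _ hB
      rw [hea] at hstrS
      have hK1 : 1 ≤ KK - 1 := by omega
      have hd1 : 1 ≤ d' := hd'1
      have h := ih a (KK-1) d' hK1 hd1 (hord a) (hchilddepth a) hstrS
      rwa [min_eq_left (by omega : KK - 1 ≤ d')] at h
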